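/- Under the algorithmic setting below (in particular, r(x^k) ≠ 0 for all k ≥ 0), the algorithm performs infinitely many successful or highly successful iterations; that is, the set of indices k for which pred_k > p_min(1−θ)‖d^k‖·min{‖r(x^k)‖, ‖r(x^k)‖^κ} and ρ_k > c₁ hold simultaneously is infinite. -/

import Mathlib

open scoped RealInnerProductSpace
open Filter Metric

noncomputable section

/-- The convex subdifferential of `g` at `y`. -/
def subdiff {n : ℕ} (g : EuclideanSpace ℝ (Fin n) → ℝ) (y : EuclideanSpace ℝ (Fin n)) :
    Set (EuclideanSpace ℝ (Fin n)) :=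
  {v | ∀ z, g y + ⟪v, z - y⟫ ≤ g z}

/-- The proximity operator `prox_g(z)`, the (unique, for convex `g`) minimizer of
`y ↦ g y + (1/2)‖y − z‖²`. -/
noncomputable def proxPt {n : ℕ} (g : EuclideanSpace ℝ (Fin n) → ℝ)
    (z : EuclideanSpace ℝ (Fin n)) : EuclideanSpace ℝ (Fin n) :=
  Classical.epsilon fun p => ∀ y, g p + (1 / 2) * ‖p - z‖ ^ 2 ≤ g y + (1 / 2) * ‖y - z‖ ^ 2

/-- The residual (prox-gradient) mapping `r(x) = x − prox_φ(x − ∇f(x))`. -/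
noncomputable def resid {n : ℕ} (f φ : EuclideanSpace ℝ (Fin n) → ℝ)
    (x : EuclideanSpace ℝ (Fin n)) : EuclideanSpace ℝ (Fin n) :=
  x - proxPt φ (x - gradient f x)

/-- The smallest eigenvalue of a symmetric operator on ℝᵐ, as the infimum of its quadratic
form over the unit sphere. -/
noncomputable def lambdaMin {m : ℕ} (T : EuclideanSpace ℝ (Fin m) →L[ℝ] EuclideanSpace ℝ (Fin m)) :
    ℝ :=
  ⨅ u : {u : EuclideanSpace ℝ (Fin m) // ‖u‖ = 1}, ⟪T u.1, u.1⟫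

section helpers

variable {n : ℕ}


lemma convex_prox_exists {φ : EuclideanSpace ℝ (Fin n) → ℝ} (hφ : ConvexOn ℝ Set.univ φ)
    (z : EuclideanSpace ℝ (Fin n)) :
    ∃ p, ∀ y, φ p + (1 / 2) * ‖p - z‖ ^ 2 ≤ φ y + (1 / 2) * ‖y - z‖ ^ 2 := by
  have hφc : Continuous φ := by
    rw [← continuousOn_univ]
    exact hφ.continuousOn isOpen_univ
  set h : EuclideanSpace ℝ (Fin n) → ℝ := fun y => φ y + (1 / 2) * ‖y - z‖ ^ 2 with hh
  have hhc : Continuous h := by fun_prop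
  -- coercivity
  obtain ⟨R, hR1, hRcoer⟩ : ∃ R : ℝ, 1 ≤ R ∧ ∀ y, R ≤ ‖y - z‖ → h z ≤ h y := by
    rcases subsingleton_or_nontrivial (EuclideanSpace ℝ (Fin n)) with hsub | hnt
    · exact ⟨1, le_rfl, fun y hy => by
        rw [Subsingleton.elim y z]⟩
    · have hsph : (sphere z (1:ℝ)).Nonempty := NormedSpace.sphere_nonempty.mpr zero_le_one
      obtain ⟨w₀, hw₀mem, hw₀min⟩ :=
        (isCompact_sphere z (1:ℝ)).exists_isMinOn hsph hφc.continuousOn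
      set mS := φ w₀
      refine ⟨max 1 (2 * (φ z - mS)), le_max_left _ _, fun y hy => ?_⟩
      have hs1 : (1:ℝ) ≤ ‖y - z‖ := le_trans (le_max_left _ _) hy
      have hs0 : (0:ℝ) < ‖y - z‖ := lt_of_lt_of_le one_pos hs1
      set s := ‖y - z‖ with hsdef
      -- w on sphere
      set w := z + s⁻¹ • (y - z) with hwdef
      have hwsph : w ∈ sphere z 1 := by
        simp only [mem_sphere_iff_norm, hwdef, add_sub_cancel_left, norm_smul,
          norm_inv, Real.norm_eq_abs, abs_of_pos hs0]
        field_simp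
        exact hsdef.symm
      have hmS : mS ≤ φ w := hw₀min hwsph
      -- convexity
      have hcomb : w = (1 - s⁻¹) • z + s⁻¹ • y := by
        rw [hwdef, smul_sub]; module
      have hconv : φ w ≤ (1 - s⁻¹) * φ z + s⁻¹ * φ y := by
        rw [hcomb]
        exact hφ.2 (Set.mem_univ z) (Set.mem_univ y)
          (by rw [sub_nonneg, inv_le_one_iff₀]; right; exact hs1)
          (by positivity) (by ring)
      have h1 : s * φ w ≤ s * ((1 - s⁻¹) * φ z + s⁻¹ * φ y) :=
        mul_le_mul_of_nonneg_left hconv hs0.le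
      have h2 : s * ((1 - s⁻¹) * φ z + s⁻¹ * φ y) = (s - 1) * φ z + φ y := by
        field_simp
      have h3 : 2 * (φ z - mS) ≤ s := le_trans (le_max_right _ _) hy
      have h4 : s * mS ≤ s * φ w := mul_le_mul_of_nonneg_left hmS hs0.le
      simp only [hh, sub_self, norm_zero]
      rw [← hsdef]
      nlinarith [h1, h2, h3, h4, hs0, hs1]
  obtain ⟨p, hpmem, hpmin⟩ := (isCompact_closedBall z R).exists_isMinOn
    ⟨z, mem_closedBall_self (by linarith)⟩ hhc.continuousOn
  refine ⟨p, fun y => ?_⟩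
  by_cases hy : y ∈ closedBall z R
  · exact hpmin hy
  · have : R ≤ ‖y - z‖ := by
      rw [mem_closedBall, dist_eq_norm] at hy; linarith [not_le.mp hy]
    exact le_trans (hpmin (mem_closedBall_self (by linarith))) (hRcoer y this)

lemma proxPt_spec {φ : EuclideanSpace ℝ (Fin n) → ℝ} (hφ : ConvexOn ℝ Set.univ φ)
    (z : EuclideanSpace ℝ (Fin n)) :
    ∀ y, φ (proxPt φ z) + (1 / 2) * ‖proxPt φ z - z‖ ^ 2 ≤ φ y + (1 / 2) * ‖y - z‖ ^ 2 :=
  Classical.epsilon_spec (convex_prox_exists hφ z)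

set_option maxHeartbeats 1000000 in
lemma proxPt_growth {φ : EuclideanSpace ℝ (Fin n) → ℝ} (hφ : ConvexOn ℝ Set.univ φ)
    (z y : EuclideanSpace ℝ (Fin n)) :
    φ (proxPt φ z) + (1 / 2) * ‖proxPt φ z - z‖ ^ 2 + (1 / 2) * ‖y - proxPt φ z‖ ^ 2
      ≤ φ y + (1 / 2) * ‖y - z‖ ^ 2 := by
  set p := proxPt φ z with hp
  have hspec := proxPt_spec hφ z
  refine le_of_forall_pos_le_add (fun ε hε => ?_)
  set c := ‖y - p‖ ^ 2 with hc
  have hc0 : 0 ≤ c := by positivity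
  set t : ℝ := min (1/2) (ε / (c + 1)) with ht
  have ht0 : 0 < t := lt_min (by norm_num) (by positivity)
  have ht1 : t < 1 := lt_of_le_of_lt (min_le_left _ _) (by norm_num)
  have htc : t * c ≤ ε := by
    have h1 : t ≤ ε / (c + 1) := min_le_right _ _
    have : t * c ≤ (ε / (c + 1)) * c := mul_le_mul_of_nonneg_right h1 hc0
    calc t * c ≤ (ε / (c + 1)) * c := this
      _ ≤ ε := by rw [div_mul_eq_mul_div, div_le_iff₀ (by positivity)]; nlinarith
  -- strong convexity step
  have hkey : φ (p + t • (y - p)) + (1/2) * ‖p + t • (y - p) - z‖ ^ 2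
      ≤ (1 - t) * (φ p + (1/2) * ‖p - z‖^2) + t * (φ y + (1/2) * ‖y - z‖^2)
        - (t * (1 - t) / 2) * c := by
    have hφpart : φ (p + t • (y - p)) ≤ (1 - t) * φ p + t * φ y := by
      have : p + t • (y - p) = (1 - t) • p + t • y := by module
      rw [this]
      exact hφ.2 (Set.mem_univ p) (Set.mem_univ y) (by linarith) ht0.le (by ring)
    have hnormpart : ‖p + t • (y - p) - z‖ ^ 2
        = (1 - t) * ‖p - z‖^2 + t * ‖y - z‖^2 - t * (1 - t) * c := by
      have hv : p + t • (y - p) - z = (p - z) + t • ((y - z) - (p - z)) := by module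
      rw [hv, hc]
      have e1 : ∀ u v : EuclideanSpace ℝ (Fin n), ‖u + v‖^2 = ‖u‖^2 + 2 * ⟪u, v⟫ + ‖v‖^2 :=
        fun u v => norm_add_sq_real u v
      have e2 : ‖(p - z) + t • ((y - z) - (p - z))‖^2
          = ‖p - z‖^2 + 2 * t * ⟪p - z, (y - z) - (p - z)⟫ + t^2 * ‖(y - z) - (p - z)‖^2 := by
        rw [e1, real_inner_smul_right, norm_smul, Real.norm_eq_abs, mul_pow, sq_abs]
        ring
      have e3 : ‖y - z‖^2 = ‖p - z‖^2 + 2 * ⟪p - z, (y - z) - (p - z)⟫ + ‖(y - z) - (p - z)‖^2 := by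
        have : y - z = (p - z) + ((y - z) - (p - z)) := by module
        nth_rewrite 1 [this]
        rw [e1]
      have e4 : (y - z) - (p - z) = y - p := by module
      rw [e2]
      rw [e4] at e3 ⊢
      nlinarith [e3]
    nlinarith [hφpart, hnormpart]
  have h2 : φ p + (1/2) * ‖p - z‖^2 ≤ φ (p + t • (y - p)) + (1/2) * ‖p + t • (y - p) - z‖^2 :=
    hspec _
  have h3 : (t * (1 - t) / 2) * c ≤ t * ((φ y + (1/2) * ‖y - z‖^2) - (φ p + (1/2) * ‖p - z‖^2)) := by
    nlinarith [hkey, h2]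
  have h4 : ((1 - t) / 2) * c ≤ (φ y + (1/2) * ‖y - z‖^2) - (φ p + (1/2) * ‖p - z‖^2) := by
    have h3' : t * (((1 - t) / 2) * c)
        ≤ t * ((φ y + (1/2) * ‖y - z‖^2) - (φ p + (1/2) * ‖p - z‖^2)) := by
      have : t * (((1 - t) / 2) * c) = t * (1 - t) / 2 * c := by ring
      rw [this]; linarith [h3]
    exact le_of_mul_le_mul_left h3' ht0
  nlinarith [h4, htc]

lemma proxPt_nonexpansive {φ : EuclideanSpace ℝ (Fin n) → ℝ} (hφ : ConvexOn ℝ Set.univ φ)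
    (z₁ z₂ : EuclideanSpace ℝ (Fin n)) :
    ‖proxPt φ z₁ - proxPt φ z₂‖ ≤ ‖z₁ - z₂‖ := by
  set p₁ := proxPt φ z₁
  set p₂ := proxPt φ z₂
  have g1 := proxPt_growth hφ z₁ p₂
  have g2 := proxPt_growth hφ z₂ p₁
  have key : ‖p₁ - p₂‖^2 ≤ ⟪p₁ - p₂, z₁ - z₂⟫ := by
    have n1 : ‖p₂ - z₁‖^2 = ‖p₂‖^2 - 2*⟪p₂,z₁⟫ + ‖z₁‖^2 := norm_sub_sq_real p₂ z₁
    have n2 : ‖p₁ - z₂‖^2 = ‖p₁‖^2 - 2*⟪p₁,z₂⟫ + ‖z₂‖^2 := norm_sub_sq_real p₁ z₂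
    have n3 : ‖p₁ - z₁‖^2 = ‖p₁‖^2 - 2*⟪p₁,z₁⟫ + ‖z₁‖^2 := norm_sub_sq_real p₁ z₁
    have n4 : ‖p₂ - z₂‖^2 = ‖p₂‖^2 - 2*⟪p₂,z₂⟫ + ‖z₂‖^2 := norm_sub_sq_real p₂ z₂
    have n5 : ⟪p₁ - p₂, z₁ - z₂⟫ = ⟪p₁,z₁⟫ - ⟪p₁,z₂⟫ - ⟪p₂,z₁⟫ + ⟪p₂,z₂⟫ := by
      rw [inner_sub_left, inner_sub_right, inner_sub_right]; ring
    have n6 : ‖p₂ - p₁‖ = ‖p₁ - p₂‖ := norm_sub_rev _ _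
    rw [n6] at g1
    nlinarith [g1, g2, n1, n2, n3, n4, n5]
  have cs : ⟪p₁ - p₂, z₁ - z₂⟫ ≤ ‖p₁ - p₂‖ * ‖z₁ - z₂‖ := real_inner_le_norm _ _
  rcases eq_or_lt_of_le (norm_nonneg (p₁ - p₂)) with h0 | h0
  · rw [← h0]; exact norm_nonneg _
  · have : ‖p₁ - p₂‖^2 ≤ ‖p₁ - p₂‖ * ‖z₁ - z₂‖ := le_trans key cs
    nlinarith [this, h0]

lemma lambdaMin_le {m : ℕ} (T : EuclideanSpace ℝ (Fin m) →L[ℝ] EuclideanSpace ℝ (Fin m))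
    (u : EuclideanSpace ℝ (Fin m)) : lambdaMin T * ‖u‖ ^ 2 ≤ ⟪T u, u⟫ := by
  rcases eq_or_ne u 0 with rfl | hu
  · simp
  · have hn : 0 < ‖u‖ := norm_pos_iff.mpr hu
    have hbdd : BddBelow (Set.range fun (w : {w : EuclideanSpace ℝ (Fin m) // ‖w‖ = 1}) =>
        ⟪T w.1, w.1⟫) := by
      refine ⟨-‖T‖, fun r hr => ?_⟩
      obtain ⟨w, rfl⟩ := hr
      have h1 : |⟪T w.1, w.1⟫| ≤ ‖T w.1‖ * ‖w.1‖ := abs_real_inner_le_norm _ _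
      have h2 : ‖T w.1‖ ≤ ‖T‖ * ‖w.1‖ := T.le_opNorm _
      rw [w.2, mul_one] at h1 h2
      have := neg_abs_le ⟪T w.1, w.1⟫
      simp only [Set.mem_setOf_eq]
      linarith
    have hwnorm : ‖(‖u‖⁻¹ • u : EuclideanSpace ℝ (Fin m))‖ = 1 := by
      rw [norm_smul, norm_inv, norm_norm, inv_mul_cancel₀ hn.ne']
    have hle : lambdaMin T ≤ ⟪T ((‖u‖⁻¹ • u : EuclideanSpace ℝ (Fin m))), ‖u‖⁻¹ • u⟫ :=
      ciInf_le hbdd ⟨‖u‖⁻¹ • u, hwnorm⟩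
    have heq : ⟪T ((‖u‖⁻¹ • u : EuclideanSpace ℝ (Fin m))), ‖u‖⁻¹ • u⟫
        = ‖u‖⁻¹ * (‖u‖⁻¹ * ⟪T u, u⟫) := by
      rw [map_smul, real_inner_smul_left, real_inner_smul_right]
    rw [heq] at hle
    have hinv : ‖u‖⁻¹ * ‖u‖ = 1 := inv_mul_cancel₀ hn.ne'
    have hmul := mul_le_mul_of_nonneg_right hle (sq_nonneg ‖u‖)
    have hsimp : ‖u‖⁻¹ * (‖u‖⁻¹ * ⟪T u, u⟫) * ‖u‖ ^ 2 = ⟪T u, u⟫ := by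
      field_simp
    rw [hsimp] at hmul
    exact hmul

lemma gradient_comp_affine {n m : ℕ} (ψ : EuclideanSpace ℝ (Fin m) → ℝ)
    (A : EuclideanSpace ℝ (Fin n) →L[ℝ] EuclideanSpace ℝ (Fin m))
    (b : EuclideanSpace ℝ (Fin m)) (hψ : ContDiff ℝ 2 ψ) :
    gradient (fun y => ψ (A y - b))
      = fun y => (ContinuousLinearMap.adjoint A) (gradient ψ (A y - b)) := by
  funext y
  apply ext_inner_right ℝ
  intro v
  have hψd : DifferentiableAt ℝ ψ (A y - b) := (hψ.differentiable (by norm_num)).differentiableAt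
  have hfd : HasFDerivAt (fun y => ψ (A y - b)) ((fderiv ℝ ψ (A y - b)).comp A) y :=
    hψd.hasFDerivAt.comp y ((A.hasFDerivAt).sub_const b)
  have h1 : ⟪gradient (fun y => ψ (A y - b)) y, v⟫
      = fderiv ℝ (fun y => ψ (A y - b)) y v := by
    rw [gradient, InnerProductSpace.toDual_symm_apply]
  rw [h1, hfd.fderiv]
  have h2 : (fderiv ℝ ψ (A y - b)) (A v) = ⟪gradient ψ (A y - b), A v⟫ := by
    rw [gradient, InnerProductSpace.toDual_symm_apply]
  rw [ContinuousLinearMap.comp_apply, h2, ContinuousLinearMap.adjoint_inner_left]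

lemma contDiff_gradient {n : ℕ} {f : EuclideanSpace ℝ (Fin n) → ℝ} (hf : ContDiff ℝ 2 f) :
    ContDiff ℝ 1 (gradient f) := by
  have : gradient f = fun y =>
      (InnerProductSpace.toDual ℝ (EuclideanSpace ℝ (Fin n))).symm (fderiv ℝ f y) := rfl
  rw [this]
  exact (InnerProductSpace.toDual ℝ
    (EuclideanSpace ℝ (Fin n))).symm.contDiff.comp (hf.fderiv_right (by norm_num))

lemma hessian_symm {n : ℕ} {f : EuclideanSpace ℝ (Fin n) → ℝ} (hf : ContDiff ℝ 2 f)
    (x u v : EuclideanSpace ℝ (Fin n)) :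
    ⟪(fderiv ℝ (gradient f) x) u, v⟫ = ⟪(fderiv ℝ (gradient f) x) v, u⟫ := by
  set L : EuclideanSpace ℝ (Fin n) →L[ℝ] StrongDual ℝ (EuclideanSpace ℝ (Fin n)) :=
    (InnerProductSpace.toDual ℝ
      (EuclideanSpace ℝ (Fin n))).toContinuousLinearEquiv.toContinuousLinearMap with hL
  have hdf : ∀ y, HasFDerivAt f
      (InnerProductSpace.toDual ℝ (EuclideanSpace ℝ (Fin n)) (gradient f y)) y := fun y =>
    ((hf.differentiable (by norm_num) y).hasGradientAt).hasFDerivAt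
  have hg1 := contDiff_gradient hf
  have hB : HasFDerivAt (gradient f) (fderiv ℝ (gradient f) x) x :=
    (hg1.differentiable one_ne_zero x).hasFDerivAt
  have hd2 : HasFDerivAt
      (fun y => InnerProductSpace.toDual ℝ (EuclideanSpace ℝ (Fin n)) (gradient f y))
      (L.comp (fderiv ℝ (gradient f) x)) x := L.hasFDerivAt.comp x hB
  exact second_derivative_symmetric hdf hd2 u v

lemma taylor_bound {n : ℕ} {f : EuclideanSpace ℝ (Fin n) → ℝ} (hf : ContDiff ℝ 2 f)
    (x₀ : EuclideanSpace ℝ (Fin n)) :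
    ∃ C₀ : ℝ, 0 ≤ C₀ ∧ ∀ d : EuclideanSpace ℝ (Fin n), ‖d‖ ≤ 1 →
      |f (x₀ + d) - f x₀ - ⟪gradient f x₀, d⟫
        - (1/2) * ⟪d, (fderiv ℝ (gradient f) x₀) d⟫| ≤ C₀ * ‖d‖^2 := by
  set B := fderiv ℝ (gradient f) x₀ with hBdef
  set g₀ := gradient f x₀ with hg₀def
  have hg1 := contDiff_gradient hf
  have hBc : Continuous (fun y => fderiv ℝ (gradient f) y) := hg1.continuous_fderiv one_ne_zero
  obtain ⟨y₀, hy₀mem, hmax⟩ := (isCompact_closedBall x₀ 1).exists_isMaxOn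
    ⟨x₀, mem_closedBall_self zero_le_one⟩
    ((hBc.sub continuous_const).norm.continuousOn :
      ContinuousOn (fun y => ‖fderiv ℝ (gradient f) y - B‖) _)
  set C₁ := ‖fderiv ℝ (gradient f) y₀ - B‖ with hC₁def
  have hC₁0 : 0 ≤ C₁ := norm_nonneg _
  have hgd : ∀ y : EuclideanSpace ℝ (Fin n), HasFDerivAt (gradient f) (fderiv ℝ (gradient f) y) y := fun y =>
    (hg1.differentiable one_ne_zero y).hasFDerivAt
  have hMVT1 : ∀ y ∈ closedBall x₀ 1, ‖gradient f y - gradient f x₀ - B (y - x₀)‖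
      ≤ C₁ * ‖y - x₀‖ := by
    intro y hy
    exact (convex_closedBall x₀ 1).norm_image_sub_le_of_norm_hasFDerivWithin_le'
      (fun z hz => (hgd z).hasFDerivWithinAt) (fun z hz => hmax hz)
      (mem_closedBall_self zero_le_one) hy
  -- derivative of the remainder function
  set h : EuclideanSpace ℝ (Fin n) → ℝ := fun y => f y - ⟪g₀, y - x₀⟫ - (1/2) * ⟪y - x₀, B (y - x₀)⟫ with hhdef
  have hhd : ∀ y : EuclideanSpace ℝ (Fin n), HasFDerivAt h
      (innerSL ℝ (gradient f y - g₀ - B (y - x₀))) y := by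
    intro y
    have p1 : HasFDerivAt f (innerSL ℝ (gradient f y)) y := by
      have := ((hf.differentiable (by norm_num) y).hasGradientAt).hasFDerivAt
      refine this.congr_fderiv ?_
      ext v
      simp [InnerProductSpace.toDual_apply_apply]
    have hsub : HasFDerivAt (fun y : EuclideanSpace ℝ (Fin n) => y - x₀) (ContinuousLinearMap.id ℝ (EuclideanSpace ℝ (Fin n))) y :=
      (hasFDerivAt_id y).sub_const x₀
    have p2 : HasFDerivAt (fun y : EuclideanSpace ℝ (Fin n) => ⟪g₀, y - x₀⟫)
        ((fderivInnerCLM ℝ (g₀, y - x₀)).comp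
          ((0 : EuclideanSpace ℝ (Fin n) →L[ℝ] EuclideanSpace ℝ (Fin n)).prod (ContinuousLinearMap.id ℝ (EuclideanSpace ℝ (Fin n))))) y :=
      (hasFDerivAt_const g₀ y).inner ℝ hsub
    have hBy : HasFDerivAt (fun y : EuclideanSpace ℝ (Fin n) => B (y - x₀)) (B.comp (ContinuousLinearMap.id ℝ (EuclideanSpace ℝ (Fin n)))) y :=
      B.hasFDerivAt.comp y hsub
    have p3 : HasFDerivAt (fun y : EuclideanSpace ℝ (Fin n) => ⟪y - x₀, B (y - x₀)⟫)
        ((fderivInnerCLM ℝ (y - x₀, B (y - x₀))).comp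
          ((ContinuousLinearMap.id ℝ (EuclideanSpace ℝ (Fin n))).prod (B.comp (ContinuousLinearMap.id ℝ (EuclideanSpace ℝ (Fin n)))))) y :=
      hsub.inner ℝ hBy
    have := (p1.sub p2).sub (p3.const_mul (1/2))
    refine (this.congr_fderiv ?_)
    ext v
    simp only [ContinuousLinearMap.coe_sub', Pi.sub_apply, ContinuousLinearMap.coe_smul',
      Pi.smul_apply, ContinuousLinearMap.coe_comp', Function.comp_apply,
      ContinuousLinearMap.prod_apply, ContinuousLinearMap.coe_id', id_eq,
      ContinuousLinearMap.zero_apply, fderivInnerCLM_apply, innerSL_apply_apply, smul_eq_mul]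
    have hs1 : ⟪y - x₀, B v⟫ = ⟪B (y - x₀), v⟫ :=
      (real_inner_comm _ _).trans (hessian_symm hf x₀ v (y - x₀))
    have hs2 : ⟪v, B (y - x₀)⟫ = ⟪B (y - x₀), v⟫ := real_inner_comm _ _
    rw [inner_zero_left, hs1, hs2, inner_sub_left, inner_sub_left]
    ring
  refine ⟨C₁, hC₁0, fun d hd => ?_⟩
  have hxmem : x₀ ∈ closedBall x₀ ‖d‖ := mem_closedBall_self (norm_nonneg d)
  have hymem : x₀ + d ∈ closedBall x₀ ‖d‖ := by
    rw [mem_closedBall, dist_eq_norm, add_sub_cancel_left]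
  have hbound : ∀ z ∈ closedBall x₀ ‖d‖,
      ‖innerSL ℝ (gradient f z - g₀ - B (z - x₀))‖ ≤ C₁ * ‖d‖ := by
    intro z hz
    rw [innerSL_apply_norm]
    have hz1 : z ∈ closedBall x₀ 1 := closedBall_subset_closedBall hd hz
    refine le_trans (hMVT1 z hz1) (mul_le_mul_of_nonneg_left ?_ hC₁0)
    rw [mem_closedBall, dist_eq_norm] at hz
    exact hz
  have key := (convex_closedBall x₀ ‖d‖).norm_image_sub_le_of_norm_hasFDerivWithin_le
    (fun z hz => (hhd z).hasFDerivWithinAt) hbound hxmem hymem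
  rw [add_sub_cancel_left] at key
  have hhx₀ : h x₀ = f x₀ := by simp [hhdef]
  have hhxd : h (x₀ + d) = f (x₀ + d) - ⟪g₀, d⟫ - (1/2) * ⟪d, B d⟫ := by
    simp [hhdef, add_sub_cancel_left]
  rw [hhx₀, hhxd] at key
  calc |f (x₀ + d) - f x₀ - ⟪g₀, d⟫ - (1/2) * ⟪d, B d⟫|
      = ‖f (x₀ + d) - ⟪g₀, d⟫ - 1/2 * ⟪d, B d⟫ - f x₀‖ := by
        rw [Real.norm_eq_abs]; congr 1; ring
    _ ≤ C₁ * ‖d‖ * ‖d‖ := key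
    _ = C₁ * ‖d‖^2 := by ring

lemma hessian_comp_affine {n m : ℕ} (ψ : EuclideanSpace ℝ (Fin m) → ℝ)
    (A : EuclideanSpace ℝ (Fin n) →L[ℝ] EuclideanSpace ℝ (Fin m))
    (b : EuclideanSpace ℝ (Fin m)) (hψ : ContDiff ℝ 2 ψ) (y : EuclideanSpace ℝ (Fin n)) :
    fderiv ℝ (gradient (fun x => ψ (A x - b))) y
      = (ContinuousLinearMap.adjoint A).comp
          ((fderiv ℝ (gradient ψ) (A y - b)).comp A) := by
  rw [gradient_comp_affine ψ A b hψ]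
  have hψg1 : ContDiff ℝ 1 (gradient ψ) := contDiff_gradient hψ
  have hT : HasFDerivAt (gradient ψ) (fderiv ℝ (gradient ψ) (A y - b)) (A y - b) :=
    (hψg1.differentiable one_ne_zero _).hasFDerivAt
  have h1 : HasFDerivAt (fun x => A x - b) A y := A.hasFDerivAt.sub_const b
  have h2 : HasFDerivAt (fun y => (ContinuousLinearMap.adjoint A) (gradient ψ (A y - b)))
      ((ContinuousLinearMap.adjoint A).comp ((fderiv ℝ (gradient ψ) (A y - b)).comp A)) y :=
    (ContinuousLinearMap.adjoint A).hasFDerivAt.comp y (by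
      have h3 := hT.comp y h1
      exact h3)
  exact h2.fderiv

end helpers

set_option maxHeartbeats 4000000 in
/-- Theorem 4.4: since `r(xᵏ) ≠ 0` for all `k`, the algorithm performs infinitely many
successful or highly successful iterations, i.e. the set of `k` with
`pred_k > p_min(1−θ)‖dᵏ‖ min{‖r(xᵏ)‖, ‖r(xᵏ)‖^κ}` and `ρ_k > c₁` is infinite. -/
theorem stmt_7 {n m : ℕ}
    -- problem data: f(x) = ψ(Ax − b), F = f + φ bounded below, φ convex, ψ C²
    (ψ : EuclideanSpace ℝ (Fin m) → ℝ)
    (A : EuclideanSpace ℝ (Fin n) →L[ℝ] EuclideanSpace ℝ (Fin m))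
    (b : EuclideanSpace ℝ (Fin m))
    (φ : EuclideanSpace ℝ (Fin n) → ℝ)
    (hψ : ContDiff ℝ 2 ψ) (hφ : ConvexOn ℝ Set.univ φ)
    (f F : EuclideanSpace ℝ (Fin n) → ℝ)
    (hf : ∀ y, f y = ψ (A y - b)) (hF : ∀ y, F y = f y + φ y)
    (hFbdd : BddBelow (Set.range F))
    -- algorithm parameters
    (c₁ c₂ σ₁ σ₂ η θ α a νmin ν₀ νbar δ τ pmin κ : ℝ)
    (hc₁ : 0 < c₁) (hc₁' : c₁ < 1) (hc₂ : c₁ < c₂) (hc₂' : c₂ < 1)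
    (hσ₁ : 0 < σ₁) (hσ₁' : σ₁ < 1) (hσ₂ : 1 < σ₂)
    (hη : 0 < η) (hη' : η < 1) (hθ : 0 < θ) (hθ' : θ < 1)
    (hα : 0 < α) (hα' : α < 1) (ha : 1 ≤ a)
    (hνmin : 0 < νmin) (hν₀a : νmin ≤ ν₀) (hν₀b : ν₀ ≤ νbar)
    (hδ0 : 0 < δ) (hδ1 : δ ≤ 1) (hτ : δ ≤ τ)
    (hpmin : 0 < pmin) (hpmin' : pmin < 1 / 2) (hκ : 1 + δ < κ)
    -- iterates and regularization sequences
    (x xhat : ℕ → EuclideanSpace ℝ (Fin n)) (ν rbar μ : ℕ → ℝ)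
    (hν0 : ν 0 = ν₀) (hrbar0 : rbar 0 = ‖resid f φ (x 0)‖)
    (hμ : ∀ k, μ k = ν k * rbar k ^ δ)
    -- Λ_k, H_k + μ_k I =: G_k, the models q_k, q̂_k, and the subproblem residual R_k
    (Λ : ℕ → ℝ)
    (hΛ : ∀ k, Λ k = a * max (-(lambdaMin (fderiv ℝ (gradient ψ) (A (x k) - b)))) 0)
    (G : ℕ → EuclideanSpace ℝ (Fin n) →L[ℝ] EuclideanSpace ℝ (Fin n))
    (hG : ∀ k, G k = fderiv ℝ (gradient f) (x k)
        + Λ k • ((ContinuousLinearMap.adjoint A).comp A)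
        + μ k • ContinuousLinearMap.id ℝ (EuclideanSpace ℝ (Fin n)))
    (q qhat : ℕ → EuclideanSpace ℝ (Fin n) → ℝ)
    (hq : ∀ k y, q k y = f (x k) + ⟪gradient f (x k), y - x k⟫
        + (1 / 2) * ⟪y - x k, (fderiv ℝ (gradient f) (x k)) (y - x k)⟫ + φ y)
    (hqhat : ∀ k y, qhat k y = f (x k) + ⟪gradient f (x k), y - x k⟫
        + (1 / 2) * ⟪y - x k, (G k) (y - x k)⟫ + φ y)
    (R : ℕ → EuclideanSpace ℝ (Fin n) → EuclideanSpace ℝ (Fin n))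
    (hR : ∀ k y, R k y = y - proxPt φ (y - gradient f (x k) - (G k) (y - x k)))
    -- the inexactness criteria satisfied by x̂ᵏ
    (hinex1 : ∀ k, ‖R k (xhat k)‖ ≤
        θ * min ‖resid f φ (x k)‖ (‖resid f φ (x k)‖ ^ (1 + τ)))
    (hinex2 : ∀ k, α * μ k / 2 * ‖xhat k - x k‖ ^ 2 ≤ F (x k) - qhat k (xhat k))
    -- dᵏ, pred_k, ared_k, ρ_k
    (d : ℕ → EuclideanSpace ℝ (Fin n)) (hd : ∀ k, d k = xhat k - x k)
    (pred ared ρ : ℕ → ℝ)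
    (hpred : ∀ k, pred k = F (x k) - q k (xhat k))
    (hared : ∀ k, ared k = F (x k) - F (xhat k))
    (hρ : ∀ k, ρ k = ared k / pred k)
    -- update rules (unsuccessful / successful / highly successful iterations)
    (unsucc : ℕ → Prop)
    (hunsucc : ∀ k, unsucc k ↔
        pred k ≤ pmin * (1 - θ) * ‖d k‖ *
          min ‖resid f φ (x k)‖ (‖resid f φ (x k)‖ ^ κ) ∨ ρ k ≤ c₁)
    (hupd : ∀ k,
        (unsucc k → x (k + 1) = x k ∧ ν (k + 1) = σ₂ * ν k) ∧
        (¬unsucc k → x (k + 1) = xhat k ∧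
          (ρ k ≤ c₂ → ν (k + 1) = min (ν k) νbar) ∧
          (c₂ < ρ k → ν (k + 1) = min (max (σ₁ * ν k) νmin) νbar)))
    (hrbarupd : ∀ k,
        (‖resid f φ (x (k + 1))‖ ≤ η * rbar k → rbar (k + 1) = ‖resid f φ (x (k + 1))‖) ∧
        (¬‖resid f φ (x (k + 1))‖ ≤ η * rbar k → rbar (k + 1) = rbar k))
    -- no iterate is stationary (otherwise the algorithm terminates)
    (hrne : ∀ k, resid f φ (x k) ≠ 0)
    :
    {k : ℕ | pmin * (1 - θ) * ‖d k‖ *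
        min ‖resid f φ (x k)‖ (‖resid f φ (x k)‖ ^ κ) < pred k ∧ c₁ < ρ k}.Infinite := by
  classical
  have hfunext : f = fun y => ψ (A y - b) := funext hf
  subst hfunext
  have hfc : ContDiff ℝ 2 (fun y => ψ (A y - b)) :=
    hψ.comp ((A.contDiff).sub contDiff_const)
  rcases Nat.eq_zero_or_pos n with hn0 | hnpos
  · exfalso
    apply hrne 0
    subst hn0
    ext i; exact i.elim0
  by_contra hinfset
  rw [Set.not_infinite] at hinfset
  obtain ⟨N0, hN0⟩ := hinfset.bddAbove
  set M := N0 + 1 with hMdef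
  have hun : ∀ k, M ≤ k → unsucc k := by
    intro k hk
    rw [hunsucc]
    by_contra hcon
    push_neg at hcon
    have hkle : k ≤ N0 := hN0 hcon
    omega
  have hstep : ∀ k, M ≤ k → x (k + 1) = x k ∧ ν (k + 1) = σ₂ * ν k :=
    fun k hk => (hupd k).1 (hun k hk)
  have hxconst : ∀ j, x (M + j) = x M := by
    intro j
    induction j with
    | zero => rfl
    | succ j ih =>
      have h1 := (hstep (M + j) (Nat.le_add_right _ _)).1
      have h2 : M + (j + 1) = (M + j) + 1 := rfl
      rw [h2, h1, ih]
  have hνval : ∀ j, ν (M + j) = σ₂ ^ j * ν M := by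
    intro j
    induction j with
    | zero => simp
    | succ j ih =>
      have h2 : M + (j + 1) = (M + j) + 1 := rfl
      rw [h2, (hstep (M + j) (Nat.le_add_right _ _)).2, ih, pow_succ]
      ring
  have hνbar0 : 0 < νbar := lt_of_lt_of_le hνmin (le_trans hν₀a hν₀b)
  have hσ₂0 : (0:ℝ) < σ₂ := lt_trans one_pos hσ₂
  have hνpos : ∀ k, 0 < ν k := by
    intro k
    induction k with
    | zero => rw [hν0]; exact lt_of_lt_of_le hνmin hν₀a
    | succ k ih =>
      by_cases hu : unsucc k
      · rw [((hupd k).1 hu).2]; exact mul_pos hσ₂0 ih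
      · obtain ⟨-, h1, h2⟩ := (hupd k).2 hu
        rcases le_or_gt (ρ k) c₂ with hρc | hρc
        · rw [h1 hρc]; exact lt_min ih hνbar0
        · rw [h2 hρc]
          exact lt_min (lt_of_lt_of_le hνmin (le_max_right _ _)) hνbar0
  have hrbarpos : ∀ k, 0 < rbar k := by
    intro k
    induction k with
    | zero => rw [hrbar0]; exact norm_pos_iff.mpr (hrne 0)
    | succ k ih =>
      rcases le_or_gt ‖resid (fun y => ψ (A y - b)) φ (x (k + 1))‖ (η * rbar k) with h | h
      · rw [(hrbarupd k).1 h]; exact norm_pos_iff.mpr (hrne (k + 1))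
      · rw [(hrbarupd k).2 (not_le.mpr h)]; exact ih
  set β := min (rbar M) ‖resid (fun y => ψ (A y - b)) φ (x M)‖ with hβdef
  have hβpos : 0 < β := lt_min (hrbarpos M) (norm_pos_iff.mpr (hrne M))
  have hrbarlb : ∀ j, β ≤ rbar (M + j) := by
    intro j
    induction j with
    | zero => exact min_le_left _ _
    | succ j ih =>
      have heq : M + (j + 1) = (M + j) + 1 := rfl
      rcases le_or_gt ‖resid (fun y => ψ (A y - b)) φ (x ((M + j) + 1))‖ (η * rbar (M + j))
        with h | h
      · rw [heq, (hrbarupd (M + j)).1 h]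
        have hx1 : x ((M + j) + 1) = x M := hxconst (j + 1)
        rw [hx1]
        exact min_le_right _ _
      · rw [heq, (hrbarupd (M + j)).2 (not_le.mpr h)]; exact ih
  have hμpos : ∀ k, 0 < μ k := fun k => by
    rw [hμ k]; exact mul_pos (hνpos k) (Real.rpow_pos_of_pos (hrbarpos k) δ)
  have hμlb : ∀ j, σ₂ ^ j * (ν M * β ^ δ) ≤ μ (M + j) := by
    intro j
    rw [hμ (M + j), hνval j]
    have h1 : β ^ δ ≤ rbar (M + j) ^ δ :=
      Real.rpow_le_rpow hβpos.le (hrbarlb j) hδ0.le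
    have h2 : (0:ℝ) ≤ σ₂ ^ j * ν M := mul_nonneg (pow_nonneg hσ₂0.le j) (hνpos M).le
    calc σ₂ ^ j * (ν M * β ^ δ) = σ₂ ^ j * ν M * β ^ δ := by ring
      _ ≤ σ₂ ^ j * ν M * rbar (M + j) ^ δ := mul_le_mul_of_nonneg_left h1 h2
      _ = σ₂ ^ j * ν M * rbar (M + j) ^ δ := rfl
  -- φ : continuity and a bound via the maximum on the unit sphere around x M
  have hφc : Continuous φ := by
    rw [← continuousOn_univ]; exact hφ.continuousOn isOpen_univ
  haveI hnt : Nontrivial (EuclideanSpace ℝ (Fin n)) := by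
    refine nontrivial_of_ne (EuclideanSpace.single (⟨0, hnpos⟩ : Fin n) (1:ℝ)) 0 ?_
    intro hcon
    have h1 := congrArg (fun v => v (⟨0, hnpos⟩ : Fin n)) hcon
    simp [EuclideanSpace.single_apply] at h1
  obtain ⟨w₀, hw₀mem, hwmax⟩ := (isCompact_sphere (x M) 1).exists_isMaxOn
    (NormedSpace.sphere_nonempty.mpr zero_le_one) hφc.continuousOn
  set Mφ := φ w₀ with hMφdef
  have hφbound : ∀ dd : EuclideanSpace ℝ (Fin n), dd ≠ 0 →
      φ (x M) - φ (x M + dd) ≤ ‖dd‖ * (Mφ - φ (x M)) := by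
    intro dd hdd
    have hdn : 0 < ‖dd‖ := norm_pos_iff.mpr hdd
    set lam := (1 + ‖dd‖)⁻¹ with hlamdef
    have hlam0 : 0 < lam := by rw [hlamdef]; positivity
    have hlamval : lam * (1 + ‖dd‖) = 1 := by
      rw [hlamdef]
      field_simp
    have hlam1 : lam ≤ 1 := by nlinarith only [mul_pos hlam0 hdn, hlamval]
    set w' := x M - ‖dd‖⁻¹ • dd with hw'def
    have hw'mem : w' ∈ sphere (x M) 1 := by
      simp only [hw'def, mem_sphere_iff_norm, sub_sub_cancel_left, norm_neg, norm_smul,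
        norm_inv, norm_norm]
      exact inv_mul_cancel₀ hdn.ne'
    have h1lam : 1 - lam = lam * ‖dd‖ := by linarith only [hlamval]
    have hcomb : lam • (x M + dd) + (1 - lam) • w' = x M := by
      rw [h1lam, hw'def]
      have e1 : (lam * ‖dd‖) • (‖dd‖⁻¹ • dd) = lam • dd := by
        rw [smul_smul, mul_assoc, mul_inv_cancel₀ hdn.ne', mul_one]
      have e2 : lam + lam * ‖dd‖ = 1 := by rw [← hlamval]; ring
      calc lam • (x M + dd) + (lam * ‖dd‖) • (x M - ‖dd‖⁻¹ • dd)
          = (lam + lam * ‖dd‖) • x M + (lam • dd - (lam * ‖dd‖) • (‖dd‖⁻¹ • dd)) := by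
            module
        _ = x M := by rw [e1, e2, sub_self, add_zero, one_smul]
    have hφconv : φ (x M) ≤ lam * φ (x M + dd) + (1 - lam) * φ w' := by
      have h := hφ.2 (Set.mem_univ (x M + dd)) (Set.mem_univ w') hlam0.le
        (by linarith only [hlam1] : (0:ℝ) ≤ 1 - lam) (by ring : lam + (1 - lam) = 1)
      rw [hcomb] at h
      exact h
    have hφw' : φ w' ≤ Mφ := hwmax hw'mem
    have hA2 : φ (x M) ≤ lam * φ (x M + dd) + (1 - lam) * Mφ := by
      have h4 : (1 - lam) * φ w' ≤ (1 - lam) * Mφ :=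
        mul_le_mul_of_nonneg_left hφw' (by linarith only [hlam1])
      linarith only [hφconv, h4]
    have hB2 := mul_le_mul_of_nonneg_left hA2 (by positivity : (0:ℝ) ≤ 1 + ‖dd‖)
    have hC2 : (1 + ‖dd‖) * (lam * φ (x M + dd) + (1 - lam) * Mφ)
        = φ (x M + dd) + ‖dd‖ * Mφ := by
      have h2 : (1 + ‖dd‖) * lam = 1 := by rw [mul_comm]; exact hlamval
      have h3 : (1 + ‖dd‖) * (1 - lam) = ‖dd‖ := by linarith only [h2]
      calc (1 + ‖dd‖) * (lam * φ (x M + dd) + (1 - lam) * Mφ)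
          = ((1 + ‖dd‖) * lam) * φ (x M + dd) + ((1 + ‖dd‖) * (1 - lam)) * Mφ := by ring
        _ = φ (x M + dd) + ‖dd‖ * Mφ := by rw [h2, h3]; ring
    linarith only [hB2, hC2]
  -- Taylor bound and Hessian data at x M
  obtain ⟨C₀, hC₀0, hTay⟩ := taylor_bound hfc (x M)
  set g₀ := gradient (fun y => ψ (A y - b)) (x M) with hg₀def
  set Bm := fderiv ℝ (gradient (fun y => ψ (A y - b))) (x M) with hBmdef
  set rv := resid (fun y => ψ (A y - b)) φ (x M) with hrvdef
  have hnr0 : 0 < ‖rv‖ := by rw [hrvdef]; exact norm_pos_iff.mpr (hrne M)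
  have hBmrepr : Bm = (ContinuousLinearMap.adjoint A).comp
      ((fderiv ℝ (gradient ψ) (A (x M) - b)).comp A) := by
    rw [hBmdef]; exact hessian_comp_affine ψ A b hψ (x M)
  set Λbar := a * max (-(lambdaMin (fderiv ℝ (gradient ψ) (A (x M) - b)))) 0 with hΛbardef
  have hΛbar0 : 0 ≤ Λbar := mul_nonneg (by linarith only [ha]) (le_max_right _ _)
  have hquad : ∀ v : EuclideanSpace ℝ (Fin n), 0 ≤ ⟪v, Bm v⟫ + Λbar * ‖A v‖ ^ 2 := by
    intro v
    have h1 : ⟪v, Bm v⟫ = ⟪(fderiv ℝ (gradient ψ) (A (x M) - b)) (A v), A v⟫ := by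
      rw [hBmrepr, ContinuousLinearMap.comp_apply, ContinuousLinearMap.comp_apply,
        real_inner_comm, ContinuousLinearMap.adjoint_inner_left]
    have h2 := lambdaMin_le (fderiv ℝ (gradient ψ) (A (x M) - b)) (A v)
    rw [h1]
    rcases le_or_gt 0 (lambdaMin (fderiv ℝ (gradient ψ) (A (x M) - b))) with h | h
    · linarith only [h2, mul_nonneg hΛbar0 (sq_nonneg ‖A v‖),
        mul_nonneg h (sq_nonneg ‖A v‖)]
    · have hmax : max (-(lambdaMin (fderiv ℝ (gradient ψ) (A (x M) - b)))) 0
          = -(lambdaMin (fderiv ℝ (gradient ψ) (A (x M) - b))) := max_eq_left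
            (by linarith only [h])
      rw [hΛbardef, hmax]
      linarith only [h2,
        mul_nonneg (mul_nonneg (by linarith only [ha] : (0:ℝ) ≤ a - 1)
          (by linarith only [h] :
            (0:ℝ) ≤ -(lambdaMin (fderiv ℝ (gradient ψ) (A (x M) - b)))))
          (sq_nonneg ‖A v‖)]
  -- constants
  set CH := ‖Bm + Λbar • ((ContinuousLinearMap.adjoint A).comp A)‖ with hCHdef
  have hCH0 : 0 ≤ CH := norm_nonneg _
  set Cφ := |Mφ - φ (x M)| + ‖g₀‖ with hCφdef
  have hCφ0 : 0 ≤ Cφ := add_nonneg (abs_nonneg _) (norm_nonneg _)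
  have hα2 : (0:ℝ) < 1 + α := by linarith only [hα]
  have hc₁1 : 0 < 1 - c₁ := by linarith only [hc₁']
  have hpm2 : 0 < 1 + α - 2 * pmin := by linarith only [hpmin', hα]
  set Mth : ℝ := max (max ((2 * pmin * (2 + CH) + 1) / ((1 + α - 2 * pmin) / 2))
      (2 * Cφ / (1 + α))) (2 * C₀ / ((1 - c₁) * (1 + α))) with hMthdef
  have hcb : 0 < ν M * β ^ δ := mul_pos (hνpos M) (Real.rpow_pos_of_pos hβpos δ)
  obtain ⟨j, hj⟩ := pow_unbounded_of_one_lt (Mth / (ν M * β ^ δ)) hσ₂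
  set k := M + j with hkdef
  have hμbig : Mth < μ k := by
    have h1 := hμlb j
    rw [div_lt_iff₀ hcb] at hj
    rw [hkdef]
    nlinarith only [h1, hj, hcb]
  have hxk : x k = x M := hxconst j
  have hukk : unsucc k := hun k (Nat.le_add_right _ _)
  -- per-iteration quantities
  set dk := xhat k - x M with hdkdef
  have hxhatk : xhat k = x M + dk := by rw [hdkdef]; abel
  have hrkeq : resid (fun y => ψ (A y - b)) φ (x k) = rv := by rw [hxk]
  have hdkn_eq : ‖xhat k - x k‖ = ‖dk‖ := by rw [hxk, ← hdkdef]
  -- dk ≠ 0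
  have hdkne : dk ≠ 0 := by
    intro hcon
    rw [hdkdef, sub_eq_zero] at hcon
    have hxx : xhat k = x k := by rw [hxk, hcon]
    have h1 := hinex1 k
    have hRval : R k (xhat k) = resid (fun y => ψ (A y - b)) φ (x k) := by
      rw [hR k (xhat k), hxx]
      simp only [sub_self, map_zero, sub_zero]
      rfl
    rw [hRval, hrkeq] at h1
    have h2 : θ * min ‖rv‖ (‖rv‖ ^ (1 + τ)) ≤ θ * ‖rv‖ :=
      mul_le_mul_of_nonneg_left (min_le_left _ _) hθ.le
    have h3 : θ * ‖rv‖ < ‖rv‖ := by nlinarith only [hnr0, hθ']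
    linarith only [h1, h2, h3]
  have hdn : 0 < ‖dk‖ := norm_pos_iff.mpr hdkne
  -- G k representation
  have hΛk : Λ k = Λbar := by rw [hΛ k, hxk, hΛbardef]
  have hGk : G k = (Bm + Λbar • ((ContinuousLinearMap.adjoint A).comp A))
      + μ k • ContinuousLinearMap.id ℝ (EuclideanSpace ℝ (Fin n)) := by
    rw [hG k, hxk, hΛk, hBmdef]
  have hGkv : ∀ v : EuclideanSpace ℝ (Fin n),
      ⟪v, G k v⟫ = ⟪v, Bm v⟫ + Λbar * ‖A v‖ ^ 2 + μ k * ‖v‖ ^ 2 := by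
    intro v
    rw [hGk]
    simp only [ContinuousLinearMap.add_apply, ContinuousLinearMap.smul_apply,
      ContinuousLinearMap.comp_apply, ContinuousLinearMap.id_apply, inner_add_right,
      real_inner_smul_right]
    rw [ContinuousLinearMap.adjoint_inner_right, real_inner_self_eq_norm_sq,
      real_inner_self_eq_norm_sq]
  -- model identities
  have hFq : F (x k) - qhat k (xhat k)
      = φ (x M) - ⟪g₀, dk⟫ - (1/2) * ⟪dk, (G k) dk⟫ - φ (xhat k) := by
    rw [hqhat k (xhat k), hF (x k), hxk, ← hdkdef, ← hg₀def]
    ring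
  have hFqq : F (x k) - q k (xhat k)
      = φ (x M) - ⟪g₀, dk⟫ - (1/2) * ⟪dk, Bm dk⟫ - φ (xhat k) := by
    rw [hq k (xhat k), hF (x k), hxk, ← hdkdef, ← hg₀def, ← hBmdef]
    ring
  have hpredk : pred k = φ (x M) - ⟪g₀, dk⟫ - (1/2) * ⟪dk, Bm dk⟫ - φ (xhat k) := by
    rw [hpred k, hFqq]
  have hGdk := hGkv dk
  have hquaddk := hquad dk
  have hstep1 : α * μ k / 2 * ‖dk‖ ^ 2
      ≤ φ (x M) - ⟪g₀, dk⟫ - (1/2) * ⟪dk, (G k) dk⟫ - φ (xhat k) := by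
    have h := hinex2 k
    rw [hdkn_eq, hFq] at h
    exact h
  have hφb : φ (x M) - φ (xhat k) ≤ ‖dk‖ * (Mφ - φ (x M)) := by
    have h := hφbound dk hdkne
    rw [← hxhatk] at h
    exact h
  have hgcs : -⟪g₀, dk⟫ ≤ ‖g₀‖ * ‖dk‖ := by
    have h1 := abs_real_inner_le_norm g₀ dk
    have h2 := neg_abs_le ⟪g₀, dk⟫
    linarith only [h1, h2]
  have hMabs : ‖dk‖ * (Mφ - φ (x M)) ≤ ‖dk‖ * |Mφ - φ (x M)| :=
    mul_le_mul_of_nonneg_left (le_abs_self _) hdn.le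
  -- bound on ‖dk‖
  have hkey : (1 + α) * μ k / 2 * ‖dk‖ ^ 2 ≤ (|Mφ - φ (x M)| + ‖g₀‖) * ‖dk‖ := by
    linarith only [hstep1, hGdk, hquaddk, hφb, hgcs, hMabs]
  have hdkb : ‖dk‖ * ((1 + α) * μ k) ≤ 2 * Cφ := by
    have key2 : ‖dk‖ * (‖dk‖ * ((1 + α) * μ k)) ≤ ‖dk‖ * (2 * Cφ) := by
      rw [hCφdef]
      nlinarith only [hkey]
    exact le_of_mul_le_mul_left key2 hdn
  -- lower bound on pred
  have hpredlb : (1 + α) * μ k / 2 * ‖dk‖ ^ 2 ≤ pred k := by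
    rw [hpredk]
    linarith only [hstep1, hGdk, mul_nonneg hΛbar0 (sq_nonneg ‖A dk‖)]
  have hpredpos : 0 < pred k := by
    have hq0 : 0 < (1 + α) * μ k / 2 * ‖dk‖ ^ 2 := by
      have h1 : 0 < μ k * ‖dk‖ ^ 2 := mul_pos (hμpos k) (pow_pos hdn 2)
      have h2 : 0 < α * (μ k * ‖dk‖ ^ 2) := mul_pos hα h1
      linarith only [h1, h2]
    linarith only [hq0, hpredlb]
  -- lower bound on ‖dk‖ via the residual
  have hRbd := hinex1 k
  rw [hrkeq] at hRbd
  have hGknorm : ‖G k‖ ≤ CH + μ k := by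
    rw [hGk]
    refine le_trans (norm_add_le _ _) ?_
    have h1 : ‖μ k • ContinuousLinearMap.id ℝ (EuclideanSpace ℝ (Fin n))‖ ≤ μ k := by
      refine le_trans (ContinuousLinearMap.opNorm_smul_le _ _) ?_
      rw [Real.norm_eq_abs, abs_of_pos (hμpos k)]
      calc μ k * ‖ContinuousLinearMap.id ℝ (EuclideanSpace ℝ (Fin n))‖ ≤ μ k * 1 :=
            mul_le_mul_of_nonneg_left ContinuousLinearMap.norm_id_le (hμpos k).le
        _ = μ k := mul_one _
    rw [hCHdef]
    linarith only [h1]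
  have hdklb : (1 - θ) * ‖rv‖ ≤ (2 + ‖G k‖) * ‖dk‖ := by
    have hresid_def : rv = x M - proxPt φ (x M - g₀) := by
      rw [hrvdef]
      unfold resid
      rw [← hg₀def]
    have hRdef : R k (xhat k) = xhat k - proxPt φ (xhat k - g₀ - G k dk) := by
      rw [hR k (xhat k), hxk, ← hdkdef, ← hg₀def]
    have htri1 : ‖rv‖ ≤ ‖R k (xhat k)‖ + ‖rv - R k (xhat k)‖ := by
      have h := norm_add_le (R k (xhat k)) (rv - R k (xhat k))
      have he : R k (xhat k) + (rv - R k (xhat k)) = rv := by abel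
      rw [he] at h
      exact h
    have hdiff : rv - R k (xhat k)
        = (x M - xhat k) + (proxPt φ (xhat k - g₀ - G k dk) - proxPt φ (x M - g₀)) := by
      rw [hresid_def, hRdef]; abel
    have hprox := proxPt_nonexpansive hφ (xhat k - g₀ - G k dk) (x M - g₀)
    have hz : ‖(xhat k - g₀ - G k dk) - (x M - g₀)‖ = ‖dk - G k dk‖ := by
      congr 1
      rw [hxhatk]
      abel
    have htri2 : ‖rv - R k (xhat k)‖ ≤ ‖dk‖ + (‖dk‖ + ‖G k‖ * ‖dk‖) := by
      rw [hdiff]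
      refine le_trans (norm_add_le _ _) ?_
      have h1 : ‖x M - xhat k‖ = ‖dk‖ := by
        rw [hxhatk]
        have : x M - (x M + dk) = -dk := by abel
        rw [this, norm_neg]
      have h2 : ‖proxPt φ (xhat k - g₀ - G k dk) - proxPt φ (x M - g₀)‖
          ≤ ‖dk‖ + ‖G k‖ * ‖dk‖ := by
        refine le_trans hprox ?_
        rw [hz]
        refine le_trans (norm_sub_le _ _) ?_
        linarith only [ContinuousLinearMap.le_opNorm (G k) dk]
      linarith only [h1, h2]
    have hminle : θ * min ‖rv‖ (‖rv‖ ^ (1 + τ)) ≤ θ * ‖rv‖ :=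
      mul_le_mul_of_nonneg_left (min_le_left _ _) hθ.le
    linarith only [htri1, htri2, hRbd, hminle]
  -- case analysis on how iteration k is unsuccessful
  rcases (hunsucc k).mp hukk with hcase | hcase
  · -- the pred-based criterion fails for large μ
    have hdknorm : ‖d k‖ = ‖dk‖ := by rw [hd k, hxk, ← hdkdef]
    rw [hrkeq, hdknorm] at hcase
    have hthr : pred k ≤ pmin * (1 - θ) * ‖dk‖ * ‖rv‖ := by
      refine le_trans hcase ?_
      refine mul_le_mul_of_nonneg_left (min_le_left _ _) ?_
      have : (0:ℝ) ≤ pmin * (1 - θ) := mul_nonneg hpmin.le (by linarith only [hθ'])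
      exact mul_nonneg this (norm_nonneg _)
    have hz0 : (0:ℝ) ≤ ‖dk‖ := norm_nonneg dk
    have h1 : pmin * ‖dk‖ * ((1 - θ) * ‖rv‖) ≤ pmin * ‖dk‖ * ((2 + ‖G k‖) * ‖dk‖) :=
      mul_le_mul_of_nonneg_left hdklb (mul_nonneg hpmin.le hz0)
    have h2 : pred k ≤ pmin * ‖dk‖ * ((2 + ‖G k‖) * ‖dk‖) := by
      refine le_trans hthr (le_trans (le_of_eq (by ring)) h1)
    have h3 : pmin * ‖dk‖ * ((2 + ‖G k‖) * ‖dk‖) ≤ pmin * ‖dk‖ * ((2 + CH + μ k) * ‖dk‖) := by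
      refine mul_le_mul_of_nonneg_left ?_ (mul_nonneg hpmin.le hz0)
      exact mul_le_mul_of_nonneg_right (by linarith only [hGknorm]) hz0
    have h4 := le_trans (le_trans hpredlb h2) h3
    have hz2 : (0:ℝ) < ‖dk‖ ^ 2 := pow_pos hdn 2
    have h5 : (1 + α) * μ k / 2 ≤ pmin * (2 + CH + μ k) := by
      have h6 : ((1 + α) * μ k / 2) * ‖dk‖ ^ 2 ≤ (pmin * (2 + CH + μ k)) * ‖dk‖ ^ 2 := by
        nlinarith only [h4]
      exact le_of_mul_le_mul_right h6 hz2
    have hμ1 : (2 * pmin * (2 + CH) + 1) / ((1 + α - 2 * pmin) / 2) < μ k :=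
      lt_of_le_of_lt (le_trans (le_max_left _ _) (le_max_left _ _)) hμbig
    rw [div_lt_iff₀ (by linarith only [hpm2] : (0:ℝ) < (1 + α - 2 * pmin) / 2)] at hμ1
    linarith only [h5, hμ1, mul_nonneg hpmin.le (by linarith only [hCH0] : (0:ℝ) ≤ 2 + CH)]
  · -- the ratio-based criterion fails for large μ
    have hμ2 : 2 * Cφ / (1 + α) < μ k :=
      lt_of_le_of_lt (le_trans (le_max_right _ _) (le_max_left _ _)) hμbig
    have hdk1 : ‖dk‖ ≤ 1 := by
      by_contra hcon
      push_neg at hcon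
      have h1 : (1 + α) * μ k < ‖dk‖ * ((1 + α) * μ k) := by
        have h0 : 0 < (‖dk‖ - 1) * ((1 + α) * μ k) :=
          mul_pos (by linarith only [hcon]) (mul_pos hα2 (hμpos k))
        nlinarith only [h0]
      rw [div_lt_iff₀ hα2] at hμ2
      nlinarith only [hdkb, h1, hμ2]
    have hTb := hTay dk hdk1
    have hared_pred : ared k - pred k
        = -((fun y => ψ (A y - b)) (x M + dk) - (fun y => ψ (A y - b)) (x M)
            - ⟪g₀, dk⟫ - (1/2) * ⟪dk, Bm dk⟫) := by
      rw [hared k, hpredk, hF (x k), hF (xhat k), hxk, hxhatk]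
      ring
    rw [hρ k] at hcase
    have hared_le : ared k ≤ c₁ * pred k := by
      rw [div_le_iff₀ hpredpos] at hcase
      linarith only [hcase]
    have habs := abs_le.mp hTb
    have h7 : (1 - c₁) * pred k ≤ C₀ * ‖dk‖ ^ 2 := by
      linarith only [hared_le, hared_pred, habs.1, habs.2, hpredpos]
    have h8 : ((1 - c₁) * ((1 + α) * μ k / 2)) * ‖dk‖ ^ 2 ≤ C₀ * ‖dk‖ ^ 2 := by
      have h9 := mul_le_mul_of_nonneg_left hpredlb (by linarith only [hc₁1] : (0:ℝ) ≤ 1 - c₁)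
      nlinarith only [h9, h7]
    have h10 : (1 - c₁) * ((1 + α) * μ k / 2) ≤ C₀ :=
      le_of_mul_le_mul_right h8 (pow_pos hdn 2)
    have hμ3 : 2 * C₀ / ((1 - c₁) * (1 + α)) < μ k :=
      lt_of_le_of_lt (le_max_right _ _) hμbig
    rw [div_lt_iff₀ (mul_pos hc₁1 hα2)] at hμ3
    nlinarith only [h10, hμ3]
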